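/- arXiv:1902.05750 — 2 statements merged into one kernel-verified Lean document; each statement's English description precedes it below -/
import Mathlib

section
/- Let C > 0 be fixed. Then (2/(ℓ(ℓ+1))) · ∫_{C/ℓ}^{π/2} P_ℓ(cos θ) (P_ℓ'(cos θ))² sin θ dθ = O(1) as ℓ → ∞; that is, there exist K > 0 and ℓ₀ ∈ ℕ such that for all integers ℓ ≥ ℓ₀ the absolute value of this quantity is at most K. -/
open Real intervalIntegral

/-- The `n`-th Legendre polynomial via Rodrigues' formula:
`P_n(t) = (1/(2^n n!)) dⁿ/dtⁿ (t² − 1)ⁿ`. -/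
noncomputable def legendreP (n : ℕ) (t : ℝ) : ℝ :=
  (1 / ((2 : ℝ) ^ n * (n.factorial : ℝ))) *
    iteratedDeriv n (fun s : ℝ => (s ^ 2 - 1) ^ n) t

open Polynomial



lemma deriv_sq_sub_one : derivative ((X:ℝ[X]) ^ 2 - 1) = 2 * X := by
  simp [derivative_X_pow, map_ofNat]
  norm_num

lemma rod_base (n : ℕ) (hn : 1 ≤ n) :
    (X ^ 2 - 1) * derivative ((X ^ 2 - 1) ^ n : ℝ[X])
      = 2 * (n : ℝ[X]) * X * (X ^ 2 - 1) ^ n := by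
  obtain ⟨m, rfl⟩ := Nat.exists_eq_add_of_le hn
  rw [derivative_pow, deriv_sq_sub_one, map_natCast]
  have : (1 + m - 1) = m := by omega
  rw [this, show (1 + m) = m + 1 from by omega, pow_succ]
  push_cast
  ring

lemma rod_rec (n : ℕ) (k : ℕ) (hk : k + 1 ≤ n) :
    (X ^ 2 - 1) * derivative^[k + 2] ((X ^ 2 - 1) ^ n : ℝ[X]) =
      (2 * (n : ℝ[X]) - 2 * ((k : ℝ[X]) + 1)) * X * derivative^[k + 1] ((X ^ 2 - 1) ^ n)
        + (((k : ℝ[X]) + 1) * (2 * (n : ℝ[X]) - (k : ℝ[X]))) * derivative^[k] ((X ^ 2 - 1) ^ n) := by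
  induction k with
  | zero =>
      have h := congrArg derivative (rod_base n (le_trans (by norm_num) hk))
      simp only [derivative_mul, deriv_sq_sub_one, derivative_natCast, derivative_X,
        derivative_ofNat, derivative_sub, derivative_one, derivative_X_pow, map_ofNat, map_natCast, Nat.cast_ofNat,
        pow_one] at h
      show (X ^ 2 - 1) * derivative (derivative ((X ^ 2 - 1) ^ n : ℝ[X])) = _
      simp only [zero_add, Function.iterate_one, Function.iterate_zero, id, Nat.cast_zero]
      linear_combination h
  | succ k ih =>
      have h := congrArg derivative (ih (by omega))
      simp only [derivative_mul, derivative_add, deriv_sq_sub_one, derivative_natCast,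
        derivative_X, derivative_ofNat, derivative_one, derivative_sub, derivative_X_pow,
        map_ofNat, map_natCast, Nat.cast_ofNat, pow_one] at h
      show (X ^ 2 - 1) * derivative^[(k+2)+1] ((X ^ 2 - 1) ^ n : ℝ[X]) = _
      rw [Function.iterate_succ_apply' derivative (k+2)]
      rw [Function.iterate_succ_apply' derivative (k+1)] at h ⊢
      rw [Function.iterate_succ_apply' derivative k] at h ⊢
      push_cast
      linear_combination h



lemma rod_ode (m : ℕ) :
    (X ^ 2 - 1) * derivative^[m + 3] ((X ^ 2 - 1) ^ (m + 1) : ℝ[X])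
      + 2 * X * derivative^[m + 2] ((X ^ 2 - 1) ^ (m + 1))
      = (((m : ℝ[X]) + 1) * ((m : ℝ[X]) + 2)) * derivative^[m + 1] ((X ^ 2 - 1) ^ (m + 1)) := by
  have h := congrArg derivative (rod_rec (m + 1) m (by omega))
  simp only [derivative_mul, derivative_add, deriv_sq_sub_one, derivative_natCast,
    derivative_X, derivative_ofNat, derivative_one, derivative_sub, derivative_X_pow,
    map_ofNat, map_natCast, Nat.cast_ofNat, pow_one] at h
  rw [show m + 3 = (m + 2) + 1 from rfl, Function.iterate_succ_apply' derivative (m+2)]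
  rw [Function.iterate_succ_apply' derivative (m+1)] at h ⊢
  rw [Function.iterate_succ_apply' derivative m] at h ⊢
  push_cast at h ⊢
  linear_combination h

lemma rod_eval_one (n : ℕ) :
    (derivative^[n] ((X ^ 2 - 1) ^ n : ℝ[X])).eval 1 = 2 ^ n * n.factorial := by
  have key : ∀ k, k ≤ n → ∃ r : ℝ[X],
      derivative^[k] ((X ^ 2 - 1) ^ n : ℝ[X]) = (X - 1) ^ (n - k) * r ∧
        r.eval 1 = (n.descFactorial k : ℝ) * 2 ^ n := by
    intro k
    induction k with
    | zero =>
        intro _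
        refine ⟨(X + 1) ^ n, ?_, by simp; norm_num⟩
        simp only [Function.iterate_zero, id, Nat.sub_zero, ← mul_pow]
        ring_nf
    | succ k ih =>
        intro hk
        obtain ⟨r, hr, he⟩ := ih (by omega)
        refine ⟨(↑(n - k) : ℝ[X]) * r + (X - 1) * derivative r, ?_, ?_⟩
        · rw [Function.iterate_succ_apply', hr, derivative_mul, derivative_pow]
          have h1 : n - k = (n - (k + 1)) + 1 := by omega
          rw [h1]
          simp only [derivative_sub, derivative_X, derivative_one, sub_zero, map_natCast,
            Nat.add_sub_cancel, pow_succ]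
          push_cast
          ring
        · simp only [eval_add, eval_mul, eval_natCast, eval_sub, eval_X, eval_one, sub_self,
            zero_mul, add_zero, he, Nat.descFactorial_succ]
          push_cast
          ring
  obtain ⟨r, hr, he⟩ := key n le_rfl
  rw [hr, Nat.sub_self, pow_zero, one_mul, he, Nat.descFactorial_self]
  ring




/-- `pp n k t = c_n · (Dᵏ (X²-1)ⁿ)(t)`;  `pp n n = legendreP n`. -/
noncomputable def pp (n k : ℕ) (t : ℝ) : ℝ :=
  (1 / ((2 : ℝ) ^ n * (n.factorial : ℝ))) * (derivative^[k] ((X ^ 2 - 1) ^ n : ℝ[X])).eval t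

lemma iteratedDeriv_poly (p : ℝ[X]) (k : ℕ) :
    iteratedDeriv k (fun x => p.eval x) = fun x => (derivative^[k] p).eval x := by
  induction k with
  | zero => simp
  | succ k ih =>
      rw [iteratedDeriv_succ, ih, Function.iterate_succ_apply']
      funext x
      exact Polynomial.deriv (𝕜 := ℝ) _

lemma legendreP_eq (n : ℕ) : legendreP n = pp n n := by
  funext t
  have : (fun s : ℝ => (s ^ 2 - 1) ^ n) = fun s => (((X:ℝ[X]) ^ 2 - 1) ^ n).eval s := by
    funext s; simp
  rw [legendreP, pp, this, iteratedDeriv_poly]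

lemma hasDerivAt_pp (n k : ℕ) (t : ℝ) : HasDerivAt (pp n k) (pp n (k + 1) t) t := by
  unfold pp
  rw [Function.iterate_succ_apply']
  exact (Polynomial.hasDerivAt _ t).const_mul _

lemma continuous_pp (n k : ℕ) : Continuous (pp n k) := by
  exact continuous_const.mul (Polynomial.continuous _)

lemma deriv_legendreP (n : ℕ) : deriv (legendreP n) = pp n (n + 1) := by
  funext t
  rw [legendreP_eq]
  exact (hasDerivAt_pp n n t).deriv

lemma pp_one (n : ℕ) : pp n n 1 = 1 := by
  rw [pp, rod_eval_one]
  have h1 : ((2 : ℝ) ^ n * (n.factorial : ℝ)) ≠ 0 := by positivity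
  field_simp

lemma ode_eval (m : ℕ) (t : ℝ) :
    (t ^ 2 - 1) * pp (m + 1) (m + 3) t + 2 * t * pp (m + 1) (m + 2) t
      = ((m : ℝ) + 1) * ((m : ℝ) + 2) * pp (m + 1) (m + 1) t := by
  have h := congrArg (eval t) (rod_ode m)
  simp only [eval_add, eval_mul, eval_sub, eval_pow, eval_X, eval_one, eval_natCast,
    eval_ofNat] at h
  unfold pp
  push_cast at h
  linear_combination (1 / ((2:ℝ) ^ (m+1) * ((m+1).factorial : ℝ))) * h



/-- The energy `E θ = λ·P(cos θ)² + (P'(cos θ)·sin θ)²` and its derivative. -/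
noncomputable def energy (m : ℕ) (θ : ℝ) : ℝ :=
  ((m : ℝ) + 1) * ((m : ℝ) + 2) * (pp (m + 1) (m + 1) (Real.cos θ)) ^ 2 +
    (pp (m + 1) (m + 2) (Real.cos θ) * Real.sin θ) ^ 2

lemma hasDerivAt_energy (m : ℕ) (θ : ℝ) :
    HasDerivAt (energy m)
      (-(2 * Real.cos θ * Real.sin θ * (pp (m + 1) (m + 2) (Real.cos θ)) ^ 2)) θ := by
  have hA : HasDerivAt (fun θ => pp (m + 1) (m + 1) (Real.cos θ))
      (pp (m + 1) (m + 2) (Real.cos θ) * -Real.sin θ) θ :=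
    (hasDerivAt_pp (m + 1) (m + 1) (Real.cos θ)).comp θ (Real.hasDerivAt_cos θ)
  have hB : HasDerivAt (fun θ => pp (m + 1) (m + 2) (Real.cos θ) * Real.sin θ)
      ((pp (m + 1) (m + 3) (Real.cos θ) * -Real.sin θ) * Real.sin θ +
        pp (m + 1) (m + 2) (Real.cos θ) * Real.cos θ) θ := by
    exact (((hasDerivAt_pp (m + 1) (m + 2) (Real.cos θ)).comp θ
      (Real.hasDerivAt_cos θ))).mul (Real.hasDerivAt_sin θ)
  have hE : HasDerivAt (energy m)
      (((m : ℝ) + 1) * ((m : ℝ) + 2) *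
          (2 * pp (m + 1) (m + 1) (Real.cos θ) *
            (pp (m + 1) (m + 2) (Real.cos θ) * -Real.sin θ)) +
        2 * (pp (m + 1) (m + 2) (Real.cos θ) * Real.sin θ) *
          ((pp (m + 1) (m + 3) (Real.cos θ) * -Real.sin θ) * Real.sin θ +
            pp (m + 1) (m + 2) (Real.cos θ) * Real.cos θ)) θ := by
    have h1 := ((hA.pow 2).const_mul (((m : ℝ) + 1) * ((m : ℝ) + 2))).add (hB.pow 2)
    convert h1 using 1
    all_goals try rfl
    ring
  convert hE using 1
  have hode := ode_eval m (Real.cos θ)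
  have hpyth := Real.sin_sq_add_cos_sq θ
  linear_combination (-(2 * pp (m + 1) (m + 2) (Real.cos θ) * Real.sin θ)) * hode
    + (2 * pp (m + 1) (m + 2) (Real.cos θ) * Real.sin θ *
        pp (m + 1) (m + 3) (Real.cos θ)) * hpyth

lemma energy_bound (m : ℕ) {θ : ℝ} (hθ : θ ∈ Set.Icc 0 (π / 2)) :
    (pp (m + 1) (m + 2) (Real.cos θ) * Real.sin θ) ^ 2 ≤ ((m : ℝ) + 1) * ((m : ℝ) + 2) := by
  have hanti : AntitoneOn (energy m) (Set.Icc 0 (π / 2)) := by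
    apply antitoneOn_of_deriv_nonpos (convex_Icc 0 (π / 2))
    · exact fun x _ => ((hasDerivAt_energy m x).differentiableAt).continuousAt.continuousWithinAt
    · exact fun x _ => ((hasDerivAt_energy m x).differentiableAt).differentiableWithinAt
    · intro x hx
      rw [interior_Icc, Set.mem_Ioo] at hx
      rw [(hasDerivAt_energy m x).deriv]
      have h1 : 0 ≤ Real.cos x := Real.cos_nonneg_of_mem_Icc
        ⟨by linarith [hx.1, pi_pos], le_of_lt hx.2⟩
      have h2 : 0 ≤ Real.sin x := Real.sin_nonneg_of_nonneg_of_le_pi (le_of_lt hx.1)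
        (by linarith [hx.2, pi_pos])
      have h3 := mul_nonneg (mul_nonneg (mul_nonneg (by norm_num : (0:ℝ) ≤ 2) h1) h2)
        (sq_nonneg (pp (m + 1) (m + 2) (Real.cos x)))
      linarith
  have h0 : energy m 0 = ((m : ℝ) + 1) * ((m : ℝ) + 2) := by
    simp [energy, pp_one]
  have hle : energy m θ ≤ energy m 0 := by
    apply hanti (Set.left_mem_Icc.2 (by positivity)) hθ hθ.1
  rw [h0] at hle
  simp only [energy] at hle
  have h4 := mul_nonneg (mul_nonneg (by positivity : (0:ℝ) ≤ (m:ℝ)+1)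
    (by positivity : (0:ℝ) ≤ (m:ℝ)+2)) (sq_nonneg (pp (m + 1) (m + 1) (Real.cos θ)))
  linarith




lemma alg_aux (s sa : ℝ) (hs : s ≠ 0) (hsa : sa ≠ 0) :
    (2/s^2) * ((1/s^2) * (s^3/3 + s^3/(3 * sa)) + (4/(3*s^2)) * (s^3 / sa))
      = 2/(3*s) + 10/(3*(s * sa)) := by
  field_simp
  ring

set_option maxHeartbeats 2000000 in
theorem legendre_deriv_sq_norm_integral_bounded (C : ℝ) (hC : 0 < C) :
    ∃ K > 0, ∃ ℓ₀ : ℕ, ∀ ℓ : ℕ, ℓ₀ ≤ ℓ →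
      |(2 / ((ℓ : ℝ) * ((ℓ : ℝ) + 1))) *
        ∫ θ in (C / (ℓ : ℝ))..(π / 2),
          legendreP ℓ (Real.cos θ) * (deriv (legendreP ℓ) (Real.cos θ)) ^ 2 *
            Real.sin θ| ≤ K := by
  refine ⟨1 + 6 / C, by positivity, ⌈C⌉₊ + 1, ?_⟩
  intro ℓ hℓ
  obtain ⟨m, rfl⟩ : ∃ m, ℓ = m + 1 := ⟨ℓ - 1, by omega⟩
  have hnR : (1 : ℝ) ≤ ((m + 1 : ℕ) : ℝ) := by exact_mod_cast Nat.one_le_iff_ne_zero.2 (by omega)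
  have hnpos : (0 : ℝ) < ((m + 1 : ℕ) : ℝ) := by linarith
  have hCn : C ≤ ((m + 1 : ℕ) : ℝ) := by
    have h1 : C ≤ (⌈C⌉₊ : ℝ) := Nat.le_ceil C
    have h2 : (⌈C⌉₊ : ℝ) ≤ ((m + 1 : ℕ) : ℝ) := by exact_mod_cast by omega
    linarith
  set a : ℝ := C / ((m + 1 : ℕ) : ℝ) with ha_def
  have ha0 : 0 < a := by positivity
  have ha1 : a ≤ 1 := by rw [ha_def, div_le_one hnpos]; linarith
  have hπ4 : π ≤ 4 := by linarith [pi_le_four]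
  have haπ : a ≤ π / 2 := by linarith [pi_gt_three]
  set lam : ℝ := ((m : ℝ) + 1) * ((m : ℝ) + 2) with hlam_def
  have hlam_pos : 0 < lam := by positivity
  have hlam_cast : ((m + 1 : ℕ) : ℝ) * (((m + 1 : ℕ) : ℝ) + 1) = lam := by
    rw [hlam_def]; push_cast; ring
  set s : ℝ := Real.sqrt lam with hs_def
  have hs2 : s ^ 2 = lam := Real.sq_sqrt hlam_pos.le
  have hs_pos : 0 < s := Real.sqrt_pos.2 hlam_pos
  have hns : ((m + 1 : ℕ) : ℝ) ≤ s := by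
    rw [hs_def, show (((m + 1:ℕ) : ℝ)) = Real.sqrt (((m + 1:ℕ):ℝ)^2) from
      (Real.sqrt_sq (by linarith)).symm]
    apply Real.sqrt_le_sqrt
    rw [hlam_def]; push_cast; nlinarith
  have hs1 : 1 ≤ s := le_trans hnR hns
  -- key uniform bound from the energy argument
  have keyB : ∀ θ ∈ Set.Icc (0:ℝ) (π / 2), |pp (m + 1) (m + 2) (Real.cos θ) * Real.sin θ| ≤ s := by
    intro θ hθ
    have h1 := energy_bound m hθ
    have h2 : (pp (m + 1) (m + 2) (Real.cos θ) * Real.sin θ) ^ 2 ≤ s ^ 2 := by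
      rw [hs2, hlam_def]; exact h1
    nlinarith [sq_abs (pp (m + 1) (m + 2) (Real.cos θ) * Real.sin θ),
      abs_nonneg (pp (m + 1) (m + 2) (Real.cos θ) * Real.sin θ)]
  -- names for the functions involved
  set A : ℝ → ℝ := fun θ => pp (m + 1) (m + 2) (Real.cos θ) with hA_def
  set f : ℝ → ℝ := fun θ => pp (m + 1) (m + 1) (Real.cos θ) * (A θ) ^ 2 * Real.sin θ with hf_def
  set g : ℝ → ℝ := fun θ => -(1/3) * (A θ) ^ 3 * (Real.sin θ) ^ 2 with hg_def
  set g' : ℝ → ℝ := fun θ =>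
    (A θ) ^ 2 * pp (m + 1) (m + 3) (Real.cos θ) * (Real.sin θ) ^ 3
      - (2/3) * (A θ) ^ 3 * Real.sin θ * Real.cos θ with hg'_def
  set hh : ℝ → ℝ := fun θ => -(Real.cos θ * Real.sin θ * (A θ) ^ 3) with hhh_def
  have hgderiv : ∀ θ : ℝ, HasDerivAt g (g' θ) θ := by
    intro θ
    have h1 : HasDerivAt A (pp (m + 1) (m + 3) (Real.cos θ) * -Real.sin θ) θ := by
      have := (hasDerivAt_pp (m + 1) (m + 2) (Real.cos θ)).comp θ (Real.hasDerivAt_cos θ)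
      exact this
    have h2 := ((h1.pow 3).mul ((Real.hasDerivAt_sin θ).pow 2)).const_mul (-(1/3) : ℝ)
    simp only [Pi.mul_apply, Pi.pow_apply] at h2
    convert h2 using 1
    all_goals try rfl
    · funext y
      show -(1/3) * (A y) ^ 3 * (Real.sin y) ^ 2 = _
      ring
    · show A θ ^ 2 * pp (m + 1) (m + 3) (Real.cos θ) * (Real.sin θ) ^ 3
        - (2/3) * (A θ) ^ 3 * Real.sin θ * Real.cos θ = _
      ring
  have hcontA : Continuous A := (continuous_pp (m + 1) (m + 2)).comp Real.continuous_cos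
  have hcontf : Continuous f := by
    exact (((continuous_pp (m + 1) (m + 1)).comp Real.continuous_cos).mul
      (hcontA.pow 2)).mul Real.continuous_sin
  have hcontg' : Continuous g' := by
    apply Continuous.sub
    · exact ((hcontA.pow 2).mul ((continuous_pp (m + 1) (m + 3)).comp
        Real.continuous_cos)).mul (Real.continuous_sin.pow 3)
    · exact ((continuous_const.mul (hcontA.pow 3)).mul Real.continuous_sin).mul
        Real.continuous_cos
  have hconth : Continuous hh := by
    exact ((Real.continuous_cos.mul Real.continuous_sin).mul (hcontA.pow 3)).neg
  -- pointwise identity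
  have hID : ∀ θ : ℝ, f θ = -(1/lam) * g' θ + (-(4/(3*lam))) * hh θ := by
    intro θ
    have hode : (Real.cos θ ^ 2 - 1) * pp (m + 1) (m + 3) (Real.cos θ)
        + 2 * Real.cos θ * pp (m + 1) (m + 2) (Real.cos θ)
        = lam * pp (m + 1) (m + 1) (Real.cos θ) := ode_eval m (Real.cos θ)
    have hpyth := Real.sin_sq_add_cos_sq θ
    have hID' : lam * f θ = -g' θ - (4/3) * hh θ := by
      simp only [hf_def, hg'_def, hhh_def, hA_def]
      linear_combination (-(pp (m + 1) (m + 2) (Real.cos θ) ^ 2 * Real.sin θ)) * hode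
        + (pp (m + 1) (m + 2) (Real.cos θ) ^ 2 * Real.sin θ
            * pp (m + 1) (m + 3) (Real.cos θ)) * hpyth
    have hlam_ne : lam ≠ 0 := ne_of_gt hlam_pos
    have h5 : f θ = (lam * f θ) / lam := by field_simp
    rw [h5, hID']
    field_simp
    ring
  -- the integral decomposition
  have hInt : (∫ θ in a..(π/2), f θ)
      = -(1/lam) * (g (π/2) - g a) + (-(4/(3*lam))) * ∫ θ in a..(π/2), hh θ := by
    rw [show (fun θ => f θ) = fun θ => -(1/lam) * g' θ + (-(4/(3*lam))) * hh θ from funext hID]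
    rw [intervalIntegral.integral_add
        ((continuous_const.fun_mul hcontg').intervalIntegrable a (π/2))
        ((continuous_const.fun_mul hconth).intervalIntegrable a (π/2)),
      intervalIntegral.integral_const_mul, intervalIntegral.integral_const_mul,
      intervalIntegral.integral_eq_sub_of_hasDerivAt (fun x _ => hgderiv x)
        (hcontg'.intervalIntegrable a (π/2))]
  -- boundary bounds
  have hbpi : |g (π/2)| ≤ s^3/3 := by
    have h1 := keyB (π/2) ⟨by positivity, le_refl _⟩
    rw [Real.sin_pi_div_two, mul_one] at h1
    have h2 : |A (π/2)| ^ 3 ≤ s ^ 3 := pow_le_pow_left₀ (abs_nonneg _) h1 3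
    have h3 : |g (π/2)| = (1/3) * |A (π/2)| ^ 3 := by
      simp only [hg_def, Real.sin_pi_div_two]
      rw [abs_mul, abs_mul, abs_pow, abs_neg]
      norm_num
    rw [h3]; linarith
  have hsa_pos : 0 < Real.sin a := Real.sin_pos_of_pos_of_lt_pi ha0
    (by linarith [pi_gt_three])
  have hsa1 : Real.sin a ≤ 1 := Real.sin_le_one a
  have hba : |g a| ≤ s^3/(3 * Real.sin a) := by
    have h1 := keyB a ⟨ha0.le, haπ⟩
    have h2 : |A a * Real.sin a| ^ 3 ≤ s ^ 3 := pow_le_pow_left₀ (abs_nonneg _) h1 3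
    have h3 : |g a| = (1/3) * |A a| ^ 3 * (Real.sin a) ^ 2 := by
      simp only [hg_def]
      rw [abs_mul, abs_mul, abs_pow, abs_neg, abs_pow, abs_of_nonneg hsa_pos.le]
      norm_num
    rw [h3, le_div_iff₀ (by positivity)]
    calc (1/3) * |A a| ^ 3 * (Real.sin a) ^ 2 * (3 * Real.sin a)
        = |A a * Real.sin a| ^ 3 := by
          rw [abs_mul, abs_of_nonneg hsa_pos.le]; ring
      _ ≤ s ^ 3 := h2
      _ = s^3 := by ring
  -- bound on ∫ hh
  have hsinpos : ∀ t ∈ Set.Icc a (π/2), 0 < Real.sin t := by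
    intro t ht
    exact Real.sin_pos_of_pos_of_lt_pi (lt_of_lt_of_le ha0 ht.1)
      (lt_of_le_of_lt ht.2 (by linarith [pi_gt_three]))
  have hIntBnd : (∫ θ in a..(π/2), s^3 * (Real.cos θ / (Real.sin θ)^2))
      = s^3 / Real.sin a - s^3 := by
    have hder : ∀ t ∈ Set.uIcc a (π/2), HasDerivAt (fun θ => -(s^3) * (Real.sin θ)⁻¹)
        (s^3 * (Real.cos t / (Real.sin t)^2)) t := by
      intro t ht
      rw [Set.uIcc_of_le haπ] at ht
      have h1 := ((Real.hasDerivAt_sin t).inv (ne_of_gt (hsinpos t ht))).const_mul (-(s^3) : ℝ)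
      convert h1 using 1
      all_goals try rfl
      field_simp
    have hcont : ContinuousOn (fun θ => s^3 * (Real.cos θ / (Real.sin θ)^2))
        (Set.uIcc a (π/2)) := by
      rw [Set.uIcc_of_le haπ]
      apply ContinuousOn.mul continuousOn_const
      apply ContinuousOn.div Real.continuous_cos.continuousOn
        (Real.continuous_sin.pow 2).continuousOn
      intro t ht
      exact pow_ne_zero 2 (ne_of_gt (hsinpos t ht))
    rw [intervalIntegral.integral_eq_sub_of_hasDerivAt hder
      (hcont.intervalIntegrable)]
    rw [Real.sin_pi_div_two]
    field_simp
    ring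
  have hhb : |∫ θ in a..(π/2), hh θ| ≤ s^3 / Real.sin a := by
    have hbnd : ∀ᵐ t ∂(MeasureTheory.volume.restrict (Set.uIoc a (π/2))),
        ‖hh t‖ ≤ s^3 * (Real.cos t / (Real.sin t)^2) := by
      apply Filter.eventually_of_mem (MeasureTheory.self_mem_ae_restrict measurableSet_uIoc)
      intro t ht
      rw [Set.uIoc_of_le haπ] at ht
      have htI : t ∈ Set.Icc a (π/2) := ⟨ht.1.le, ht.2⟩
      have hsp := hsinpos t htI
      have hcp : 0 ≤ Real.cos t := Real.cos_nonneg_of_mem_Icc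
        ⟨by linarith [ht.1, ha0, pi_pos], ht.2⟩
      have hAs := keyB t ⟨by linarith [ht.1, ha0], ht.2⟩
      have h3 : (|A t| * Real.sin t) ^ 3 ≤ s ^ 3 := by
        refine pow_le_pow_left₀ (by positivity) ?_ 3
        rw [← abs_of_nonneg hsp.le, ← abs_mul]
        exact hAs
      have e1 : ‖hh t‖ = Real.cos t * Real.sin t * |A t| ^ 3 := by
        rw [Real.norm_eq_abs]
        simp only [hhh_def]
        rw [abs_neg, abs_mul, abs_mul, abs_pow, abs_of_nonneg hcp, abs_of_nonneg hsp.le]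
      rw [e1, mul_comm (s^3) _, div_mul_eq_mul_div, le_div_iff₀ (by positivity)]
      calc Real.cos t * Real.sin t * |A t| ^ 3 * Real.sin t ^ 2
          = Real.cos t * (|A t| * Real.sin t) ^ 3 := by ring
        _ ≤ Real.cos t * s ^ 3 := mul_le_mul_of_nonneg_left h3 hcp
    have h1 := intervalIntegral.norm_integral_le_abs_of_norm_le hbnd
      (by
        have : ContinuousOn (fun θ => s^3 * (Real.cos θ / (Real.sin θ)^2))
            (Set.uIcc a (π/2)) := by
          rw [Set.uIcc_of_le haπ]
          apply ContinuousOn.mul continuousOn_const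
          apply ContinuousOn.div Real.continuous_cos.continuousOn
            (Real.continuous_sin.pow 2).continuousOn
          intro t ht
          exact pow_ne_zero 2 (ne_of_gt (hsinpos t ht))
        exact this.intervalIntegrable)
    rw [Real.norm_eq_abs] at h1
    rw [hIntBnd] at h1
    have h2 : |s^3 / Real.sin a - s^3| = s^3 / Real.sin a - s^3 := by
      rw [abs_of_nonneg]
      rw [sub_nonneg, le_div_iff₀ hsa_pos]
      simpa using mul_le_mul_of_nonneg_left hsa1 (pow_pos hs_pos 3).le
    rw [h2] at h1
    have h4 : (0:ℝ) < s ^ 3 := pow_pos hs_pos 3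
    linarith
  -- triangle inequality
  have htri : |∫ θ in a..(π/2), f θ|
      ≤ (1/lam) * (|g (π/2)| + |g a|) + (4/(3*lam)) * |∫ θ in a..(π/2), hh θ| := by
    rw [hInt]
    calc |(-(1/lam)) * (g (π/2) - g a) + (-(4/(3*lam))) * ∫ θ in a..(π/2), hh θ|
        ≤ |(-(1/lam)) * (g (π/2) - g a)| + |(-(4/(3*lam))) * ∫ θ in a..(π/2), hh θ| :=
          abs_add_le _ _
      _ = (1/lam) * |g (π/2) - g a| + (4/(3*lam)) * |∫ θ in a..(π/2), hh θ| := by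
          rw [abs_mul, abs_mul, abs_neg, abs_neg, abs_of_pos (by positivity : (0:ℝ) < 1/lam),
            abs_of_pos (by positivity : (0:ℝ) < 4/(3*lam))]
      _ ≤ (1/lam) * (|g (π/2)| + |g a|) + (4/(3*lam)) * |∫ θ in a..(π/2), hh θ| := by
          have := abs_sub (g (π/2)) (g a)
          gcongr
  -- assemble
  have hfb : |∫ θ in a..(π/2), f θ|
      ≤ (1/lam) * (s^3/3 + s^3/(3 * Real.sin a)) + (4/(3*lam)) * (s^3 / Real.sin a) := by
    refine le_trans htri ?_
    gcongr
  have hrw : (∫ θ in (C / ((m + 1 : ℕ) : ℝ))..(π/2),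
      legendreP (m + 1) (Real.cos θ) * (deriv (legendreP (m + 1)) (Real.cos θ)) ^ 2 *
        Real.sin θ) = ∫ θ in a..(π/2), f θ := by
    rw [deriv_legendreP, legendreP_eq]
  have habs : |(2 / (((m + 1 : ℕ) : ℝ) * (((m + 1 : ℕ) : ℝ) + 1))) *
      ∫ θ in (C / ((m + 1 : ℕ) : ℝ))..(π/2),
        legendreP (m + 1) (Real.cos θ) * (deriv (legendreP (m + 1)) (Real.cos θ)) ^ 2 *
          Real.sin θ| = (2/lam) * |∫ θ in a..(π/2), f θ| := by
    rw [hrw, hlam_cast, abs_mul, abs_of_pos (by positivity : (0:ℝ) < 2/lam)]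
  rw [habs]
  have hna : a * ((m + 1 : ℕ) : ℝ) = C := by
    rw [ha_def]; exact div_mul_cancel₀ C (ne_of_gt hnpos)
  clear_value A f g g' hh s lam a
  -- final numeric bound
  have hQ : (2/lam) * |∫ θ in a..(π/2), f θ|
      ≤ (2/lam) * ((1/lam) * (s^3/3 + s^3/(3 * Real.sin a)) + (4/(3*lam)) * (s^3 / Real.sin a)) := by
    gcongr
  have heq : (2/lam) * ((1/lam) * (s^3/3 + s^3/(3 * Real.sin a)) + (4/(3*lam)) * (s^3 / Real.sin a))
      = 2/(3*s) + 10/(3*(s * Real.sin a)) := by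
    rw [← hs2]
    exact alg_aux s (Real.sin a) (ne_of_gt hs_pos) (ne_of_gt hsa_pos)
  have hssa : 2*C/π ≤ s * Real.sin a := by
    have t1 : 2/π * a ≤ Real.sin a := Real.mul_le_sin ha0.le haπ
    have t2 : ((m + 1 : ℕ) : ℝ) * (2/π * a) ≤ ((m + 1 : ℕ) : ℝ) * Real.sin a :=
      mul_le_mul_of_nonneg_left t1 hnpos.le
    have t3 : ((m + 1 : ℕ) : ℝ) * Real.sin a ≤ s * Real.sin a :=
      mul_le_mul_of_nonneg_right hns hsa_pos.le
    have t4 : ((m + 1 : ℕ) : ℝ) * (2/π * a) = 2*C/π := by rw [← hna]; ring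
    linarith
  have h1 : 2/(3*s) ≤ 1 := by
    exact div_le_one_of_le₀ (by linarith) (by linarith)
  have h2 : 10/(3*(s * Real.sin a)) ≤ 6/C := by
    rw [div_le_div_iff₀ (by nlinarith [mul_pos hs_pos hsa_pos] : (0:ℝ) < 3*(s*Real.sin a)) hC]
    have hssa' : 2*C ≤ π * (s * Real.sin a) := by
      rw [div_le_iff₀ pi_pos] at hssa; linarith
    have hπ315 : π < 3.15 := Real.pi_lt_d2
    nlinarith [mul_pos hs_pos hsa_pos]
  calc (2/lam) * |∫ θ in a..(π/2), f θ|
      ≤ (2/lam) * ((1/lam) * (s^3/3 + s^3/(3 * Real.sin a))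
          + (4/(3*lam)) * (s^3 / Real.sin a)) := hQ
    _ = 2/(3*s) + 10/(3*(s * Real.sin a)) := heq
    _ ≤ 1 + 6/C := by linarith
end

section
/- Let C > 0 be fixed. Then, as ℓ → ∞, ∫_{C/ℓ}^{π/2} P_ℓ(cos θ)² · (4/(ℓ²(ℓ+1)²)) P_ℓ'(cos θ)² sin θ dθ = O(1/ℓ²); that is, there exist K > 0 and ℓ₀ ∈ ℕ such that for all integers ℓ ≥ ℓ₀ the absolute value of this integral is at most K/ℓ². -/
open Real intervalIntegral

open Polynomial in
noncomputable def U (n : ℕ) : ℝ[X] := (X^2 - 1)^n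
open Polynomial in
noncomputable def Lp (n : ℕ) : ℝ[X] :=
  C (((2:ℝ)^n * n.factorial)⁻¹) * derivative^[n] (U n)

open Polynomial

lemma evalIter (p : ℝ[X]) (n : ℕ) :
    iteratedDeriv n (fun s : ℝ => p.eval s) = fun t => (derivative^[n] p).eval t := by
  induction n with
  | zero => simp
  | succ k ih =>
    rw [iteratedDeriv_succ, ih, Function.iterate_succ']
    funext t
    exact Polynomial.deriv _

lemma legendreP_eq_s12 (n : ℕ) (t : ℝ) : legendreP n t = (Lp n).eval t := by
  have : (fun s : ℝ => ((X^2 - 1 : ℝ[X])^n).eval s) = fun s : ℝ => (s^2-1)^n := by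
    funext s; simp
  rw [legendreP, Lp, ← this, evalIter]
  simp [U, one_div]

lemma deriv_legendreP_eq (n : ℕ) (t : ℝ) :
    deriv (legendreP n) t = (derivative (Lp n)).eval t := by
  have : legendreP n = fun t => (Lp n).eval t := funext (legendreP_eq_s12 n)
  rw [this]
  exact Polynomial.deriv _

lemma U_step (ℓ : ℕ) (hℓ : 1 ≤ ℓ) (k : ℕ) :
    (X^2 - 1) * derivative^[k+1] (U ℓ) =
      C (2*((ℓ:ℝ)-k)) * (X * derivative^[k] (U ℓ)) +
      C ((k:ℝ)*(2*ℓ-k+1)) * derivative^[k-1] (U ℓ) := by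
  induction k with
  | zero =>
    simp only [zero_add, Function.iterate_one, Function.iterate_zero, id_eq, Nat.cast_zero]
    rw [U, derivative_pow]
    have h1 : (X^2 - 1 : ℝ[X]) * (C (ℓ:ℝ) * (X^2-1)^(ℓ-1) * derivative (X^2-1)) =
        C (ℓ:ℝ) * ((X^2-1)^(ℓ-1) * (X^2-1)) * derivative (X^2-1) := by ring
    rw [h1, ← pow_succ, Nat.sub_add_cancel hℓ]
    simp only [derivative_sub, derivative_one, derivative_X_pow, sub_zero, map_mul, map_sub,
      map_ofNat, map_one, Nat.cast_ofNat, mul_zero, zero_mul, map_zero]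
    ring
  | succ k ih =>
    have hd := congrArg derivative ih
    rw [derivative_mul, derivative_add, derivative_mul, derivative_mul] at hd
    simp only [derivative_C, zero_mul, zero_add, derivative_mul, derivative_X, one_mul,
      derivative_sub, derivative_one, derivative_pow, derivative_X_pow, sub_zero] at hd
    have e1 : derivative (derivative^[k+1] (U ℓ)) = derivative^[k+1+1] (U ℓ) :=
      (Function.iterate_succ_apply' _ _ _).symm
    have e2 : derivative (derivative^[k] (U ℓ)) = derivative^[k+1] (U ℓ) :=
      (Function.iterate_succ_apply' _ _ _).symm
    rcases k with _ | m
    · rw [e1, e2] at hd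
      rw [show (0:ℕ)+1-1 = 0 from rfl]
      simp only [Function.iterate_zero, id_eq, Nat.cast_zero, Nat.cast_one, zero_add] at hd ⊢
      push_cast at hd ⊢
      simp only [map_mul, map_sub, map_add, map_one, map_ofNat, map_zero, zero_mul,
        map_zero] at hd ⊢
      linear_combination hd
    · have e3 : derivative (derivative^[m+1-1] (U ℓ)) = derivative^[m+1] (U ℓ) :=
        (Function.iterate_succ_apply' _ _ _).symm
      rw [e1, e2, e3] at hd
      rw [show m+1+1-1 = m+1 from rfl]
      push_cast at hd ⊢
      simp only [map_mul, map_sub, map_add, map_one, map_ofNat] at hd ⊢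
      linear_combination hd

/-- The Legendre ODE in polynomial form. -/
lemma Lp_ODE (ℓ : ℕ) (hℓ : 1 ≤ ℓ) :
    (1 - X^2) * derivative^[2] (Lp ℓ) =
      C 2 * (X * derivative (Lp ℓ)) - C ((ℓ:ℝ)*(ℓ+1)) * Lp ℓ := by
  have h := U_step ℓ hℓ (ℓ+1)
  have e1 : derivative^[ℓ+1+1] (U ℓ) = derivative^[2] (derivative^[ℓ] (U ℓ)) := by
    rw [show ℓ+1+1 = 2+ℓ from by omega, Function.iterate_add_apply]
  have e2 : derivative^[ℓ+1] (U ℓ) = derivative (derivative^[ℓ] (U ℓ)) :=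
    Function.iterate_succ_apply' _ _ _
  rw [e1, e2, show ℓ+1-1 = ℓ from rfl] at h
  have hc : derivative^[2] (Lp ℓ) = C (((2:ℝ)^ℓ * ℓ.factorial)⁻¹) *
      derivative^[2] (derivative^[ℓ] (U ℓ)) := by
    simp [Lp, derivative_C_mul]
  have hc1 : derivative (Lp ℓ) = C (((2:ℝ)^ℓ * ℓ.factorial)⁻¹) *
      derivative (derivative^[ℓ] (U ℓ)) := by
    simp [Lp, derivative_C_mul]
  rw [hc, hc1, Lp]
  push_cast at h ⊢
  simp only [map_mul, map_sub, map_add, map_one, map_ofNat] at h ⊢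
  linear_combination (-(C (((2:ℝ)^ℓ * ℓ.factorial)⁻¹))) * h

lemma iterEvalA (a : ℝ) : ∀ (n : ℕ) (g : ℝ[X]),
    (derivative^[n] ((X - C a)^n * g)).eval a = n.factorial * g.eval a := by
  intro n
  induction n with
  | zero => intro g; simp
  | succ n ih =>
    intro g
    have key : derivative ((X - C a)^(n+1) * g)
        = (X - C a)^n * (C ((n:ℝ)+1) * g + (X - C a) * derivative g) := by
      rw [derivative_mul, derivative_pow]
      simp only [derivative_sub, derivative_X, derivative_C, sub_zero, mul_one,
        Nat.add_sub_cancel, Nat.cast_add, Nat.cast_one]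
      ring
    rw [Function.iterate_succ_apply, key, ih]
    simp only [eval_add, eval_mul, eval_sub, eval_X, eval_C, sub_self, zero_mul, add_zero]
    push_cast [Nat.factorial_succ]
    ring

lemma iterEvalB (a : ℝ) : ∀ (n : ℕ) (g : ℝ[X]),
    (derivative^[n+1] ((X - C a)^n * g)).eval a
      = (n+1).factorial * (derivative g).eval a := by
  intro n
  induction n with
  | zero => intro g; simp
  | succ n ih =>
    intro g
    have key : derivative ((X - C a)^(n+1) * g)
        = (X - C a)^n * (C ((n:ℝ)+1) * g + (X - C a) * derivative g) := by
      rw [derivative_mul, derivative_pow]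
      simp only [derivative_sub, derivative_X, derivative_C, sub_zero, mul_one,
        Nat.add_sub_cancel, Nat.cast_add, Nat.cast_one]
      ring
    rw [Function.iterate_succ_apply, key, ih]
    simp only [derivative_add, derivative_mul, derivative_sub, derivative_X, derivative_C,
      sub_zero, one_mul, eval_add, eval_mul, eval_sub, eval_X, eval_C, sub_self, zero_mul,
      add_zero, Nat.factorial_succ, eval_zero, mul_zero]
    push_cast
    ring

lemma U_factor_pos (ℓ : ℕ) : U ℓ = (X - C 1)^ℓ * (X - C (-1))^ℓ := by
  rw [U, ← mul_pow]
  congr 1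
  simp only [map_neg, map_one, sub_neg_eq_add]
  ring

lemma U_factor_neg (ℓ : ℕ) : U ℓ = (X - C (-1))^ℓ * (X - C 1)^ℓ := by
  rw [U_factor_pos]; ring

lemma Lp_eval_one (ℓ : ℕ) : (Lp ℓ).eval 1 = 1 := by
  rw [Lp, U_factor_pos]
  simp only [eval_mul, eval_C, iterEvalA]
  have : ((X - C (-1) : ℝ[X])^ℓ).eval 1 = 2^ℓ := by
    simp [eval_pow]; norm_num
  rw [this]
  have h2 : ((2:ℝ)^ℓ * ℓ.factorial) ≠ 0 := by positivity
  field_simp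

lemma Lp_eval_neg_one (ℓ : ℕ) : (Lp ℓ).eval (-1) = (-1)^ℓ := by
  rw [Lp, U_factor_neg]
  simp only [eval_mul, eval_C, iterEvalA]
  have : ((X - C 1 : ℝ[X])^ℓ).eval (-1) = (-2)^ℓ := by
    simp [eval_pow]; norm_num
  rw [this]
  have h2 : ((2:ℝ)^ℓ * ℓ.factorial) ≠ 0 := by positivity
  rw [show ((-2:ℝ))^ℓ = (-1)^ℓ * 2^ℓ by rw [← neg_one_mul, mul_pow]]
  field_simp

lemma dLp_eq (n : ℕ) : derivative (Lp n) =
    C (((2:ℝ)^n * n.factorial)⁻¹) * derivative^[n+1] (U n) := by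
  rw [Lp, derivative_C_mul]
  conv_rhs => rw [Function.iterate_succ_apply']

lemma dLp_eval_one (ℓ : ℕ) (hℓ : 1 ≤ ℓ) :
    (derivative (Lp ℓ)).eval 1 = (ℓ:ℝ)*(ℓ+1)/2 := by
  obtain ⟨n, rfl⟩ : ∃ n, ℓ = n + 1 := ⟨ℓ-1, (Nat.succ_pred_eq_of_pos hℓ).symm⟩
  rw [dLp_eq, U_factor_pos, eval_mul, eval_C, iterEvalB]
  have hg : (derivative ((X - C (-1) : ℝ[X])^(n+1))).eval 1 = (n+1) * 2^n := by
    rw [derivative_pow]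
    simp only [derivative_sub, derivative_X, derivative_C, sub_zero, mul_one,
      Nat.add_sub_cancel, eval_mul, eval_pow, eval_sub, eval_X, eval_C]
    norm_num
  rw [hg]
  have h2 : ((2:ℝ)^(n+1) * (n+1).factorial) ≠ 0 := by positivity
  rw [Nat.factorial_succ (n+1)]
  push_cast
  field_simp
  ring

lemma dLp_eval_neg_one (ℓ : ℕ) (hℓ : 1 ≤ ℓ) :
    (derivative (Lp ℓ)).eval (-1) = (-1)^(ℓ+1) * ((ℓ:ℝ)*(ℓ+1)/2) := by
  obtain ⟨n, rfl⟩ : ∃ n, ℓ = n + 1 := ⟨ℓ-1, (Nat.succ_pred_eq_of_pos hℓ).symm⟩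
  rw [dLp_eq, U_factor_neg, eval_mul, eval_C, iterEvalB]
  have hg : (derivative ((X - C 1 : ℝ[X])^(n+1))).eval (-1) = (n+1) * (-2)^n := by
    rw [derivative_pow]
    simp only [derivative_sub, derivative_X, derivative_C, sub_zero, mul_one,
      Nat.add_sub_cancel, eval_mul, eval_pow, eval_sub, eval_X, eval_C]
    norm_num
  rw [hg]
  have h2 : ((2:ℝ)^(n+1) * (n+1).factorial) ≠ 0 := by positivity
  rw [Nat.factorial_succ (n+1)]
  rw [show ((-2:ℝ))^n = (-1)^n * 2^n by rw [← neg_one_mul, mul_pow]]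
  push_cast
  field_simp
  ring

lemma vanish (ℓ : ℕ) : ∀ j, j ≤ ℓ → ∃ r : ℝ[X],
    derivative^[j] (U ℓ) = (X^2 - 1)^(ℓ-j) * r := by
  intro j
  induction j with
  | zero => intro _; exact ⟨1, by simp [U]⟩
  | succ j ih =>
    intro hj
    obtain ⟨r, hr⟩ := ih (Nat.le_of_succ_le hj)
    refine ⟨C ((ℓ-j : ℕ):ℝ) * (2*X) * r + (X^2-1) * derivative r, ?_⟩
    rw [Function.iterate_succ_apply', hr, derivative_mul, derivative_pow]
    have hpos : 1 ≤ ℓ - j := by omega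
    have e : (X^2 - 1 : ℝ[X])^(ℓ-j) = (X^2-1)^(ℓ-(j+1)) * (X^2-1) := by
      rw [← pow_succ, show ℓ-(j+1)+1 = ℓ-j by omega]
    rw [e]
    simp only [derivative_sub, derivative_one, derivative_X_pow, sub_zero,
      show ℓ-j-1 = ℓ-(j+1) by omega]
    push_cast [Nat.cast_sub (by omega : j ≤ ℓ)]
    simp only [map_sub, map_ofNat]
    ring

lemma vanish_eval (ℓ j : ℕ) (hj : j < ℓ) (x : ℝ) (hx : x = 1 ∨ x = -1) :
    (derivative^[j] (U ℓ)).eval x = 0 := by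
  obtain ⟨r, hr⟩ := vanish ℓ j (le_of_lt hj)
  have hx0 : (x^2 - 1 : ℝ) = 0 := by rcases hx with h | h <;> rw [h] <;> norm_num
  rw [hr]
  simp [hx0, zero_pow (show ℓ - j ≠ 0 by omega)]

lemma ortho (ℓ : ℕ) : ∀ m, m ≤ ℓ → ∀ q : ℝ[X], derivative^[m] q = 0 →
    (∫ x in (-1:ℝ)..1, (derivative^[m] (U ℓ)).eval x * q.eval x) = 0 := by
  intro m
  induction m with
  | zero =>
    intro _ q hq
    simp only [Function.iterate_zero, id_eq] at hq
    simp [hq]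
  | succ m ih =>
    intro hm q hq
    have key := intervalIntegral.integral_mul_deriv_eq_deriv_mul
      (u := fun x => q.eval x) (v := fun x => (derivative^[m] (U ℓ)).eval x)
      (u' := fun x => (derivative q).eval x)
      (v' := fun x => (derivative^[m+1] (U ℓ)).eval x)
      (a := (-1:ℝ)) (b := 1)
      (fun x _ => Polynomial.hasDerivAt q x)
      (fun x _ => by
        have := Polynomial.hasDerivAt (derivative^[m] (U ℓ)) x
        rwa [← Function.iterate_succ_apply' derivative m] at this)
      ((Polynomial.continuous _).intervalIntegrable _ _)
      ((Polynomial.continuous _).intervalIntegrable _ _)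
    have hv1 : (derivative^[m] (U ℓ)).eval (1:ℝ) = 0 :=
      vanish_eval ℓ m (by omega) 1 (Or.inl rfl)
    have hv2 : (derivative^[m] (U ℓ)).eval (-1:ℝ) = 0 :=
      vanish_eval ℓ m (by omega) (-1) (Or.inr rfl)
    simp only [hv1, hv2, mul_zero, sub_zero, zero_sub] at key
    have hIH : (∫ x in (-1:ℝ)..1, (derivative^[m] (U ℓ)).eval x * (derivative q).eval x) = 0 := by
      apply ih (by omega)
      rw [← Function.iterate_succ_apply]
      exact hq
    calc (∫ x in (-1:ℝ)..1, (derivative^[m+1] (U ℓ)).eval x * q.eval x)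
        = ∫ x in (-1:ℝ)..1, q.eval x * (derivative^[m+1] (U ℓ)).eval x := by
          simp_rw [mul_comm]
      _ = -∫ x in (-1:ℝ)..1, (derivative q).eval x * (derivative^[m] (U ℓ)).eval x := key
      _ = -∫ x in (-1:ℝ)..1, (derivative^[m] (U ℓ)).eval x * (derivative q).eval x := by
          simp_rw [mul_comm]
      _ = 0 := by rw [hIH, neg_zero]

lemma natDegree_Lp_le (ℓ : ℕ) : (Lp ℓ).natDegree ≤ ℓ := by
  refine (natDegree_C_mul_le _ _).trans ?_
  refine (Polynomial.natDegree_iterate_derivative _ _).trans ?_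
  have hb : (X^2 - 1 : ℝ[X]).natDegree ≤ 2 := by
    refine (natDegree_sub_le _ _).trans ?_
    simp [natDegree_X_pow]
  have h1 : (U ℓ).natDegree ≤ 2*ℓ := by
    have ha := natDegree_pow_le (p := (X^2-1 : ℝ[X])) (n := ℓ)
    have h2 := Nat.mul_le_mul_left ℓ hb
    simp only [U] at ha ⊢
    omega
  omega

lemma ortho_Lp (ℓ : ℕ) (q : ℝ[X]) (hq : derivative^[ℓ] q = 0) :
    (∫ x in (-1:ℝ)..1, (Lp ℓ).eval x * q.eval x) = 0 := by
  have h := ortho ℓ ℓ le_rfl q hq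
  have : (fun x => (Lp ℓ).eval x * q.eval x)
      = fun x => (((2:ℝ)^ℓ * ℓ.factorial)⁻¹) * ((derivative^[ℓ] (U ℓ)).eval x * q.eval x) := by
    funext x; simp [Lp]; ring
  rw [this, intervalIntegral.integral_const_mul, h, mul_zero]

lemma normLp (ℓ : ℕ) (hℓ : 1 ≤ ℓ) :
    (∫ x in (-1:ℝ)..1, ((derivative (Lp ℓ)).eval x)^2) = (ℓ:ℝ)*(ℓ+1) := by
  have key := intervalIntegral.integral_mul_deriv_eq_deriv_mul
    (u := fun x => (Lp ℓ).eval x) (v := fun x => (derivative (Lp ℓ)).eval x)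
    (u' := fun x => (derivative (Lp ℓ)).eval x)
    (v' := fun x => (derivative (derivative (Lp ℓ))).eval x)
    (a := (-1:ℝ)) (b := 1)
    (fun x _ => Polynomial.hasDerivAt _ x)
    (fun x _ => Polynomial.hasDerivAt _ x)
    ((Polynomial.continuous _).intervalIntegrable _ _)
    ((Polynomial.continuous _).intervalIntegrable _ _)
  have hzero : (∫ x in (-1:ℝ)..1, (Lp ℓ).eval x * (derivative (derivative (Lp ℓ))).eval x) = 0 := by
    apply ortho_Lp
    have : derivative (derivative (Lp ℓ)) = derivative^[2] (Lp ℓ) := by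
      rw [show (2:ℕ) = 1+1 from rfl, Function.iterate_add_apply]
      simp
    rw [this, ← Function.iterate_add_apply]
    exact Polynomial.iterate_derivative_eq_zero (by have := natDegree_Lp_le ℓ; omega)
  rw [hzero] at key
  -- key : 0 = Lp(1)*DLp(1) - Lp(-1)*DLp(-1) - ∫ DLp * DLp
  have hsq : (∫ x in (-1:ℝ)..1, ((derivative (Lp ℓ)).eval x)^2)
      = ∫ x in (-1:ℝ)..1, (derivative (Lp ℓ)).eval x * (derivative (Lp ℓ)).eval x := by
    simp_rw [sq]
  rw [hsq]
  simp only [Lp_eval_one, Lp_eval_neg_one, dLp_eval_one ℓ hℓ, dLp_eval_neg_one ℓ hℓ] at key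
  have hsign : ((-1:ℝ))^ℓ * ((-1:ℝ))^(ℓ+1) = -1 := by
    rw [← pow_add]
    exact Odd.neg_one_pow ⟨ℓ, by ring⟩
  rw [← mul_assoc, hsign] at key
  linarith [key]

lemma boundLp (ℓ : ℕ) (hℓ : 1 ≤ ℓ) : ∀ t ∈ Set.Icc (0:ℝ) 1, ((Lp ℓ).eval t)^2 ≤ 1 := by
  set lam : ℝ := (ℓ:ℝ)*(ℓ+1) with hlam
  have hlampos : 0 < lam := by
    have : (1:ℝ) ≤ (ℓ:ℝ) := by exact_mod_cast hℓ
    nlinarith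
  set F : ℝ[X] := (Lp ℓ)^2 + C lam⁻¹ * ((1 - X^2) * (derivative (Lp ℓ))^2) with hF
  have hODE := Lp_ODE ℓ hℓ
  rw [← hlam] at hODE
  simp only [map_ofNat] at hODE
  have h2 : derivative^[2] (Lp ℓ) = derivative (derivative (Lp ℓ)) := by
    rw [show (2:ℕ) = 1+1 from rfl, Function.iterate_add_apply]; simp
  rw [h2] at hODE
  have hinv : C lam⁻¹ * C lam = 1 := by
    rw [← C_mul, inv_mul_cancel₀ (ne_of_gt hlampos), C_1]
  have hdF : derivative F = C (2*lam⁻¹) * (X * (derivative (Lp ℓ))^2) := by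
    rw [hF]
    simp only [derivative_add, derivative_mul, derivative_pow, derivative_C, derivative_sub,
      derivative_one, derivative_X_pow, derivative_X, zero_mul, zero_add, zero_sub, mul_one,
      Nat.cast_ofNat, pow_one, Nat.add_sub_cancel, map_mul, map_ofNat]
    simp only [show (2:ℕ)-1 = 1 from rfl, pow_one]
    linear_combination (C lam⁻¹ * 2 * derivative (Lp ℓ)) * hODE +
      (-(2 * Lp ℓ * derivative (Lp ℓ))) * hinv
  have hmono : MonotoneOn (fun t : ℝ => F.eval t) (Set.Icc 0 1) := by
    apply monotoneOn_of_deriv_nonneg (convex_Icc 0 1)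
      ((Polynomial.continuous _).continuousOn)
      (fun x _ => (Polynomial.differentiable _).differentiableAt.differentiableWithinAt)
    intro x hx
    rw [interior_Icc] at hx
    rw [Polynomial.deriv, hdF]
    simp only [eval_mul, eval_C, eval_X, eval_pow]
    have : (0:ℝ) ≤ x := le_of_lt hx.1
    positivity
  intro t ht
  have h1 : F.eval t ≤ F.eval 1 :=
    hmono ht (Set.mem_Icc.mpr ⟨zero_le_one, le_refl 1⟩) ht.2
  have hF1 : F.eval 1 = 1 := by
    rw [hF]
    simp [Lp_eval_one]
  have hle : ((Lp ℓ).eval t)^2 ≤ F.eval t := by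
    rw [hF]
    simp only [eval_add, eval_mul, eval_C, eval_sub, eval_one, eval_pow, eval_X]
    have h1t : 0 ≤ 1 - t^2 := by nlinarith [ht.1, ht.2]
    have : 0 ≤ lam⁻¹ * ((1 - t^2) * ((derivative (Lp ℓ)).eval t)^2) := by positivity
    linarith
  linarith [hle, h1, hF1.le]

theorem legendre_sq_deriv_sq_small (C : ℝ) (hC : 0 < C) :
    ∃ K > 0, ∃ ℓ₀ : ℕ, ∀ ℓ : ℕ, ℓ₀ ≤ ℓ →
      |∫ θ in (C / (ℓ : ℝ))..(π / 2),
          (legendreP ℓ (Real.cos θ)) ^ 2 *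
            ((4 / ((ℓ : ℝ) ^ 2 * ((ℓ : ℝ) + 1) ^ 2)) *
              (deriv (legendreP ℓ) (Real.cos θ)) ^ 2) *
            Real.sin θ| ≤ K / (ℓ : ℝ) ^ 2 := by
  refine ⟨4, by norm_num, ⌈2*C/π⌉₊ + 1, fun ℓ hℓ => ?_⟩
  have hℓ1 : 1 ≤ ℓ := le_trans (Nat.le_add_left 1 _) hℓ
  have hℓR : (1:ℝ) ≤ (ℓ:ℝ) := by exact_mod_cast hℓ1
  have hπ : (0:ℝ) < π := Real.pi_pos
  set a : ℝ := C / (ℓ:ℝ) with ha_def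
  have ha0 : 0 < a := div_pos hC (by linarith)
  have haπ : a < π/2 := by
    rw [ha_def, div_lt_iff₀ (by linarith : (0:ℝ) < (ℓ:ℝ))]
    have h1 : 2*C/π < (⌈2*C/π⌉₊ + 1 : ℕ) := by
      push_cast
      exact lt_of_le_of_lt (Nat.le_ceil _) (by linarith)
    have h2 : ((⌈2*C/π⌉₊ + 1 : ℕ) : ℝ) ≤ (ℓ:ℝ) := by exact_mod_cast hℓ
    have h3 : 2*C/π < (ℓ:ℝ) := lt_of_lt_of_le h1 h2
    rw [div_lt_iff₀ hπ] at h3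
    nlinarith
  set c4 : ℝ := 4 / ((ℓ : ℝ) ^ 2 * ((ℓ : ℝ) + 1) ^ 2) with hc4_def
  set g : ℝ → ℝ := fun t => ((Lp ℓ).eval t)^2 * (c4 * ((derivative (Lp ℓ)).eval t)^2)
    with hg_def
  have hgc : Continuous g := by
    apply Continuous.mul
    · exact (Polynomial.continuous _).pow 2
    · exact continuous_const.mul ((Polynomial.continuous _).pow 2)
  have hinteg : (fun θ => (legendreP ℓ (Real.cos θ)) ^ 2 *
        (c4 * (deriv (legendreP ℓ) (Real.cos θ)) ^ 2) * Real.sin θ)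
      = fun θ => g (Real.cos θ) * Real.sin θ := by
    funext θ
    rw [hg_def]
    simp only [legendreP_eq_s12, deriv_legendreP_eq]
  have hca0 : 0 ≤ Real.cos a := Real.cos_nonneg_of_mem_Icc ⟨by linarith, le_of_lt haπ⟩
  have hca1 : Real.cos a ≤ 1 := Real.cos_le_one a
  -- substitution
  have hsub : (∫ θ in a..(π/2), g (Real.cos θ) * Real.sin θ)
      = ∫ t in (0:ℝ)..(Real.cos a), g t := by
    have hcv := intervalIntegral.integral_comp_smul_deriv
      (a := a) (b := π/2) (f := Real.cos) (f' := fun θ => -Real.sin θ) (g := g)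
      (fun x _ => Real.hasDerivAt_cos x) (Continuous.continuousOn (by continuity)) hgc
    have he : (fun θ => g (Real.cos θ) * Real.sin θ)
        = fun θ => -((-Real.sin θ) • (g ∘ Real.cos) θ) := by
      funext θ; simp [smul_eq_mul, Function.comp]; ring
    rw [he, intervalIntegral.integral_neg, hcv, Real.cos_pi_div_two]
    rw [intervalIntegral.integral_symm, neg_neg]
  rw [hinteg, hsub]
  -- nonneg
  have hg0 : ∀ t, 0 ≤ g t := by
    intro t
    rw [hg_def]
    have : 0 ≤ c4 := by rw [hc4_def]; positivity
    positivity
  have hnn : 0 ≤ ∫ t in (0:ℝ)..(Real.cos a), g t :=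
    intervalIntegral.integral_nonneg hca0 (fun u _ => hg0 u)
  rw [abs_of_nonneg hnn]
  -- step 1 : pointwise bound by c4 * DLp²
  have hstep1 : (∫ t in (0:ℝ)..(Real.cos a), g t)
      ≤ ∫ t in (0:ℝ)..(Real.cos a), c4 * ((derivative (Lp ℓ)).eval t)^2 := by
    apply intervalIntegral.integral_mono_on hca0
    · exact hgc.intervalIntegrable _ _
    · exact (continuous_const.mul ((Polynomial.continuous _).pow 2)).intervalIntegrable _ _
    · intro t ht
      have hb := boundLp ℓ hℓ1 t ⟨ht.1, ht.2.trans hca1⟩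
      simp only [hg_def]
      have h0 : 0 ≤ c4 * ((derivative (Lp ℓ)).eval t)^2 := by
        have : 0 ≤ c4 := by rw [hc4_def]; positivity
        positivity
      nlinarith
  -- step 2 : extend interval
  have hstep2 : (∫ t in (0:ℝ)..(Real.cos a), c4 * ((derivative (Lp ℓ)).eval t)^2)
      ≤ ∫ t in (-1:ℝ)..1, c4 * ((derivative (Lp ℓ)).eval t)^2 := by
    apply intervalIntegral.integral_mono_interval (by norm_num) hca0 hca1
    · filter_upwards with x
      have : 0 ≤ c4 := by rw [hc4_def]; positivity
      positivity
    · exact (continuous_const.mul ((Polynomial.continuous _).pow 2)).intervalIntegrable _ _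
  have hval : (∫ t in (-1:ℝ)..1, c4 * ((derivative (Lp ℓ)).eval t)^2)
      = c4 * ((ℓ:ℝ)*(ℓ+1)) := by
    rw [intervalIntegral.integral_const_mul, normLp ℓ hℓ1]
  have hfinal : c4 * ((ℓ:ℝ)*(ℓ+1)) ≤ 4 / (ℓ:ℝ)^2 := by
    rw [hc4_def]
    rw [div_mul_eq_mul_div, div_le_div_iff₀ (by positivity) (by positivity)]
    nlinarith
  linarith [hstep1, hstep2, hval.le, hfinal]
end
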